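/- Suppose the IV assumptions and positivity hold, δ^D ≠ 0, and there is no additive U–d interaction in the outcome model, i.e. for every u ∈ 𝒰, E[Y1 − Y0 | U=u] = E[Y1 − Y0]. Then the Wald estimand identifies the average treatment effect: δ^Y / δ^D = E[Y1 − Y0]. -/

import Mathlib

open MeasureTheory ProbabilityTheory

/-- Conditional mean of `W` given event `A`: `E[W | A] = (∫_A W dμ) / μ(A)`. -/
noncomputable def condMean {Ω : Type*} [MeasurableSpace Ω] (μ : Measure Ω)
    (W : Ω → ℝ) (A : Set Ω) : ℝ :=
  (∫ ω in A, W ω ∂μ) / (μ A).toReal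

section Aux

variable {Ω : Type*} [MeasurableSpace Ω]

/-- indicator trick: if `g = 1` on `A` and `0` off `A`, then `∫ g·f = ∫_A f`. -/
lemma integral_mul_eq_setIntegral (ν : Measure Ω) (g f : Ω → ℝ) (A : Set Ω)
    (hA : MeasurableSet A) (hint : Integrable (fun ω => g ω * f ω) ν)
    (hg1 : ∀ ω ∈ A, g ω = 1) (hg0 : ∀ ω ∉ A, g ω = 0) :
    ∫ ω, g ω * f ω ∂ν = ∫ ω in A, f ω ∂ν := by
  rw [← integral_add_compl hA hint]
  have h1 : ∫ ω in A, g ω * f ω ∂ν = ∫ ω in A, f ω ∂ν :=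
    setIntegral_congr_fun hA (fun ω hω => by rw [hg1 ω hω, one_mul])
  have h2 : ∫ ω in Aᶜ, g ω * f ω ∂ν = ∫ ω in Aᶜ, (0:ℝ) ∂ν :=
    setIntegral_congr_fun hA.compl (fun ω hω => by rw [hg0 ω hω, zero_mul])
  rw [h1, h2, integral_zero, add_zero]

lemma integral_cond_eq (μ : Measure Ω) (s : Set Ω) (f : Ω → ℝ) :
    ∫ ω, f ω ∂(μ[|s]) = (μ s).toReal⁻¹ * ∫ ω in s, f ω ∂μ := by
  rw [ProbabilityTheory.cond, integral_smul_measure, ENNReal.toReal_inv, smul_eq_mul]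

lemma setIntegral_cond_eq (μ : Measure Ω) (s A : Set Ω) (hA : MeasurableSet A) (f : Ω → ℝ) :
    ∫ ω in A, f ω ∂(μ[|s]) = (μ s).toReal⁻¹ * ∫ ω in A ∩ s, f ω ∂μ := by
  rw [ProbabilityTheory.cond, Measure.restrict_smul, Measure.restrict_restrict hA,
    integral_smul_measure, ENNReal.toReal_inv, smul_eq_mul]

lemma integrable_cond {μ : Measure Ω} {f : Ω → ℝ} (hf : Integrable f μ) (s : Set Ω)
    (hs : μ s ≠ 0) : Integrable f (μ[|s]) := by
  rw [ProbabilityTheory.cond]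
  exact (hf.restrict).smul_measure (by simp [hs])

end Aux

/-- under the IV assumptions, positivity, `δ^D ≠ 0` and no additive
`U`–`d` interaction in the outcome model (A5.b), the Wald estimand `δ^Y / δ^D`
identifies the average treatment effect `E[Y1 − Y0]`. -/
theorem wald_identifies_ate_no_Ud_interaction
    {Ω : Type*} [MeasurableSpace Ω] (μ : Measure Ω) [IsProbabilityMeasure μ]
    {𝒰 : Type*} [Fintype 𝒰] [MeasurableSpace 𝒰] [MeasurableSingletonClass 𝒰]
    (Z D Y1 Y0 Y : Ω → ℝ) (U : Ω → 𝒰)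
    (hZmeas : Measurable Z) (hDmeas : Measurable D) (hUmeas : Measurable U)
    (hZ01 : ∀ ω, Z ω = 0 ∨ Z ω = 1) (hD01 : ∀ ω, D ω = 0 ∨ D ω = 1)
    (hY1int : Integrable Y1 μ) (hY0int : Integrable Y0 μ)
    (hYdef : ∀ ω, Y ω = D ω * Y1 ω + (1 - D ω) * Y0 ω)
    (hUpos : ∀ u : 𝒰, 0 < μ {ω | U ω = u})
    -- (A2) Z is independent of U
    (hA2 : ∀ (z : ℝ) (u : 𝒰),
      μ ({ω | Z ω = z} ∩ {ω | U ω = u}) = μ {ω | Z ω = z} * μ {ω | U ω = u})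
    -- (A1′, A4) under μ(· | U = u), each potential outcome is independent of (Z, D)
    (hA14one : ∀ u : 𝒰, IndepFun Y1 (fun ω => (Z ω, D ω)) (μ[|{ω | U ω = u}]))
    (hA14zero : ∀ u : 𝒰, IndepFun Y0 (fun ω => (Z ω, D ω)) (μ[|{ω | U ω = u}]))
    -- positivity
    (hPos : ∀ (z : ℝ), (z = 0 ∨ z = 1) → ∀ (u : 𝒰),
      0 < μ ({ω | Z ω = z} ∩ {ω | U ω = u}))
    -- δ^Y and δ^D
    (δY δD : ℝ)
    (hδY : δY = condMean μ Y {ω | Z ω = 1} - condMean μ Y {ω | Z ω = 0})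
    (hδD : δD = condMean μ D {ω | Z ω = 1} - condMean μ D {ω | Z ω = 0})
    (hδDne : δD ≠ 0)
    -- (A5.b) no additive U–d interaction in the outcome model
    (hA5b : ∀ u : 𝒰,
      condMean μ (fun ω => Y1 ω - Y0 ω) {ω | U ω = u}
        = ∫ ω, (Y1 ω - Y0 ω) ∂μ) :
    δY / δD = ∫ ω, (Y1 ω - Y0 ω) ∂μ := by
  classical
  set τ : ℝ := ∫ ω, (Y1 ω - Y0 ω) ∂μ with hτ
  set Az : ℝ → Set Ω := fun z => {ω | Z ω = z} with hAzdef
  set Uu : 𝒰 → Set Ω := fun u => {ω | U ω = u} with hUudef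
  have hAzm : ∀ z, MeasurableSet (Az z) := fun z => hZmeas (measurableSet_singleton z)
  have hUum : ∀ u, MeasurableSet (Uu u) := fun u => hUmeas (measurableSet_singleton u)
  have hUne : ∀ u, μ (Uu u) ≠ 0 := fun u => (hUpos u).ne'
  have hUnetop : ∀ u, μ (Uu u) ≠ ⊤ := fun u => measure_ne_top μ _
  have hUtR : ∀ u, (μ (Uu u)).toReal ≠ 0 :=
    fun u => ENNReal.toReal_ne_zero.mpr ⟨hUne u, hUnetop u⟩
  -- bounds
  have hDb : ∀ ω, ‖D ω‖ ≤ 1 := by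
    intro ω; rcases hD01 ω with h | h <;> simp [h]
  have hZb : ∀ ω, ‖Z ω‖ ≤ 1 := by
    intro ω; rcases hZ01 ω with h | h <;> simp [h]
  -- Y integrable
  have hYint : Integrable Y μ := by
    have h1 : Integrable (fun ω => D ω * Y1 ω) μ :=
      hY1int.bdd_mul hDmeas.aestronglyMeasurable (Filter.Eventually.of_forall hDb)
    have h2 : Integrable (fun ω => (1 - D ω) * Y0 ω) μ := by
      refine hY0int.bdd_mul ((measurable_const.sub hDmeas)).aestronglyMeasurable (c := 2) (Filter.Eventually.of_forall ?_)
      intro ω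
      calc ‖1 - D ω‖ ≤ ‖(1:ℝ)‖ + ‖D ω‖ := norm_sub_le _ _
        _ ≤ 1 + 1 := by simpa using hDb ω
        _ = 2 := by norm_num
    exact (h1.add h2).congr (Filter.Eventually.of_forall fun ω => (hYdef ω).symm)
  -- positivity of μ (Az z)
  have hAzpos : ∀ z : ℝ, (z = 0 ∨ z = 1) → (μ (Az z)).toReal ≠ 0 := by
    intro z hz
    have hne : Nonempty Ω := by
      by_contra h
      rw [not_nonempty_iff] at h
      have h1 : (Set.univ : Set Ω) = ∅ := Set.univ_eq_empty_iff.mpr h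
      have := measure_univ (μ := μ)
      rw [h1, measure_empty] at this
      exact zero_ne_one this
    have u : 𝒰 := U (Classical.arbitrary Ω)
    have h1 : 0 < μ (Az z) := lt_of_lt_of_le (hPos z hz u) (measure_mono Set.inter_subset_left)
    exact ENNReal.toReal_ne_zero.mpr ⟨h1.ne', measure_ne_top μ _⟩
  -- partition of a set-integral over the values of U
  have hpart : ∀ (f : Ω → ℝ), Integrable f μ → ∀ z : ℝ,
      ∫ ω in Az z, f ω ∂μ = ∑ u, (μ (Uu u)).toReal * ∫ ω in Az z, f ω ∂(μ[|Uu u]) := by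
    intro f hf z
    have hU : (⋃ u, (Az z ∩ Uu u)) = Az z := by
      rw [← Set.inter_iUnion]
      have : (⋃ u, Uu u) = Set.univ := by
        ext ω; simp [hUudef]
      rw [this, Set.inter_univ]
    have hdisj : Pairwise (Function.onFun Disjoint (fun u => Az z ∩ Uu u)) := by
      intro u v huv
      refine Set.disjoint_left.mpr ?_
      rintro ω ⟨-, h1⟩ ⟨-, h2⟩
      exact huv (h1.symm.trans h2)
    calc ∫ ω in Az z, f ω ∂μ = ∫ ω in ⋃ u, (Az z ∩ Uu u), f ω ∂μ := by rw [hU]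
      _ = ∑ u, ∫ ω in Az z ∩ Uu u, f ω ∂μ :=
          integral_iUnion_fintype (fun u => (hAzm z).inter (hUum u)) hdisj
            (fun u => hf.integrableOn)
      _ = ∑ u, (μ (Uu u)).toReal * ∫ ω in Az z, f ω ∂(μ[|Uu u]) := by
          refine Finset.sum_congr rfl fun u _ => ?_
          rw [setIntegral_cond_eq μ (Uu u) (Az z) (hAzm z) f, ← mul_assoc,
            mul_inv_cancel₀ (hUtR u), one_mul]
  -- the common first term
  set S0 : ℝ := ∑ u, (μ (Uu u)).toReal * ∫ ω, Y0 ω ∂(μ[|Uu u]) with hS0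
  -- key identity
  have key : ∀ (z : ℝ), (z = 0 ∨ z = 1) → ∀ (φ : ℝ → ℝ), Measurable φ →
      (∀ ω, ‖φ (Z ω)‖ ≤ 1) → (∀ ω, Z ω = z → φ (Z ω) = 1) → (∀ ω, Z ω ≠ z → φ (Z ω) = 0) →
      ∫ ω in Az z, Y ω ∂μ = S0 * (μ (Az z)).toReal + τ * ∫ ω in Az z, D ω ∂μ := by
    intro z hz φ hφm hφb hφ1 hφ0
    have keyU : ∀ u : 𝒰, ∫ ω in Az z, Y ω ∂(μ[|Uu u]) =
        (∫ ω, Y0 ω ∂(μ[|Uu u])) * (μ (Az z)).toReal + τ * ∫ ω in Az z, D ω ∂(μ[|Uu u]) := by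
      intro u
      set ν := μ[|Uu u] with hν
      have hνP : IsProbabilityMeasure ν :=
        cond_isProbabilityMeasure (hUne u)
      have hY1ν : Integrable Y1 ν := integrable_cond hY1int _ (hUne u)
      have hY0ν : Integrable Y0 ν := integrable_cond hY0int _ (hUne u)
      have hYν : Integrable Y ν := integrable_cond hYint _ (hUne u)
      have hg1 : ∀ ω ∈ Az z, φ (Z ω) = 1 := fun ω hω => hφ1 ω hω
      have hg0 : ∀ ω ∉ Az z, φ (Z ω) = 0 := fun ω hω => hφ0 ω hω
      have hφZm : Measurable fun ω => φ (Z ω) := hφm.comp hZmeas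
      have hφDm : Measurable fun ω => φ (Z ω) * D ω := hφZm.mul hDmeas
      have hφDb : ∀ ω, ‖φ (Z ω) * D ω‖ ≤ 1 := by
        intro ω
        rw [norm_mul]
        calc ‖φ (Z ω)‖ * ‖D ω‖ ≤ 1 * 1 :=
          mul_le_mul (hφb ω) (hDb ω) (norm_nonneg _) zero_le_one
          _ = 1 := one_mul 1
      -- integrabilities under ν
      have hφY : Integrable (fun ω => φ (Z ω) * Y ω) ν :=
        hYν.bdd_mul hφZm.aestronglyMeasurable (Filter.Eventually.of_forall hφb)
      have hφY0 : Integrable (fun ω => φ (Z ω) * Y0 ω) ν :=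
        hY0ν.bdd_mul hφZm.aestronglyMeasurable (Filter.Eventually.of_forall hφb)
      have hφDY1 : Integrable (fun ω => (φ (Z ω) * D ω) * Y1 ω) ν :=
        hY1ν.bdd_mul hφDm.aestronglyMeasurable (Filter.Eventually.of_forall hφDb)
      have hφDY0 : Integrable (fun ω => (φ (Z ω) * D ω) * Y0 ω) ν :=
        hY0ν.bdd_mul hφDm.aestronglyMeasurable (Filter.Eventually.of_forall hφDb)
      have hφD : Integrable (fun ω => φ (Z ω) * D ω) ν := by
        have : Integrable (fun _ => (1:ℝ)) ν := integrable_const 1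
        exact (this.bdd_mul hφDm.aestronglyMeasurable (Filter.Eventually.of_forall hφDb)).congr
          (Filter.Eventually.of_forall fun ω => by simp)
      have hφZ : Integrable (fun ω => φ (Z ω)) ν := by
        have : Integrable (fun _ => (1:ℝ)) ν := integrable_const 1
        exact (this.bdd_mul hφZm.aestronglyMeasurable (Filter.Eventually.of_forall hφb)).congr
          (Filter.Eventually.of_forall fun ω => by simp)
      -- independence consequences
      have hind1 : ∫ ω, Y1 ω * (φ (Z ω) * D ω) ∂ν =
          (∫ ω, Y1 ω ∂ν) * ∫ ω, φ (Z ω) * D ω ∂ν := by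
        have h := (hA14one u).comp measurable_id
          ((hφm.comp measurable_fst).mul measurable_snd)
        have h2 := h.integral_mul_eq_mul_integral hY1ν.aestronglyMeasurable hφD.aestronglyMeasurable
        simpa [Function.comp, Pi.mul_apply] using h2
      have hind0 : ∫ ω, Y0 ω * (φ (Z ω) * D ω) ∂ν =
          (∫ ω, Y0 ω ∂ν) * ∫ ω, φ (Z ω) * D ω ∂ν := by
        have h := (hA14zero u).comp measurable_id
          ((hφm.comp measurable_fst).mul measurable_snd)
        have h2 := h.integral_mul_eq_mul_integral hY0ν.aestronglyMeasurable hφD.aestronglyMeasurable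
        simpa [Function.comp, Pi.mul_apply] using h2
      have hind0' : ∫ ω, Y0 ω * φ (Z ω) ∂ν =
          (∫ ω, Y0 ω ∂ν) * ∫ ω, φ (Z ω) ∂ν := by
        have h := (hA14zero u).comp measurable_id (hφm.comp measurable_fst)
        have h2 := h.integral_mul_eq_mul_integral hY0ν.aestronglyMeasurable hφZ.aestronglyMeasurable
        simpa [Function.comp, Pi.mul_apply] using h2
      -- ∫ φ(Z) dν = ν (Az z) = μ (Az z)
      have hφZint : ∫ ω, φ (Z ω) ∂ν = (μ (Az z)).toReal := by
        have h1 : ∫ ω, φ (Z ω) * (1:ℝ) ∂ν = ∫ ω in Az z, (1:ℝ) ∂ν :=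
          integral_mul_eq_setIntegral ν _ _ (Az z) (hAzm z)
            (by simpa using hφZ) hg1 hg0
        have h2 : ∫ ω in Az z, (1:ℝ) ∂ν = (ν (Az z)).toReal := by
          simp [setIntegral_const, measureReal_def]
        have h3 : ν (Az z) = μ (Az z) := by
          rw [hν, cond_apply (hUum u), Set.inter_comm, hA2 z u, mul_comm (μ (Az z)),
            ← mul_assoc, ENNReal.inv_mul_cancel (hUne u) (hUnetop u), one_mul]
        calc ∫ ω, φ (Z ω) ∂ν = ∫ ω, φ (Z ω) * (1:ℝ) ∂ν := by simp
          _ = (μ (Az z)).toReal := by rw [h1, h2, h3]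
      -- ∫ φ(Z) D dν = ∫_{Az z} D dν
      have hφDint : ∫ ω, φ (Z ω) * D ω ∂ν = ∫ ω in Az z, D ω ∂ν :=
        integral_mul_eq_setIntegral ν _ _ (Az z) (hAzm z) hφD hg1 hg0
      -- ATE within stratum u
      have hτu : (∫ ω, Y1 ω ∂ν) - (∫ ω, Y0 ω ∂ν) = τ := by
        have h1 : ∫ ω, (Y1 ω - Y0 ω) ∂ν = (∫ ω, Y1 ω ∂ν) - (∫ ω, Y0 ω ∂ν) :=
          integral_sub hY1ν hY0ν
        have h2 : ∫ ω, (Y1 ω - Y0 ω) ∂ν =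
            condMean μ (fun ω => Y1 ω - Y0 ω) (Uu u) := by
          rw [hν, integral_cond_eq, condMean, div_eq_inv_mul]
        rw [← h1, h2]
        exact hA5b u
      -- main computation under ν
      have hsplit : ∫ ω, φ (Z ω) * Y ω ∂ν =
          (∫ ω, Y0 ω * φ (Z ω) ∂ν) + ((∫ ω, Y1 ω * (φ (Z ω) * D ω) ∂ν)
            - ∫ ω, Y0 ω * (φ (Z ω) * D ω) ∂ν) := by
        have hpt : ∀ ω, φ (Z ω) * Y ω =
            Y0 ω * φ (Z ω) + ((φ (Z ω) * D ω) * Y1 ω - (φ (Z ω) * D ω) * Y0 ω) := by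
          intro ω; rw [hYdef ω]; ring
        rw [integral_congr_ae (Filter.Eventually.of_forall hpt)]
        have hadd1 : Integrable (fun ω => Y0 ω * φ (Z ω)) ν := by
          simpa [mul_comm] using hφY0
        have hadd2 : Integrable
            (fun ω => (φ (Z ω) * D ω) * Y1 ω - (φ (Z ω) * D ω) * Y0 ω) ν :=
          hφDY1.sub hφDY0
        rw [integral_add hadd1 hadd2, integral_sub hφDY1 hφDY0]
        congr 2
        · exact integral_congr_ae (Filter.Eventually.of_forall fun ω => by ring)
        · exact integral_congr_ae (Filter.Eventually.of_forall fun ω => by ring)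
      have hYZ : ∫ ω in Az z, Y ω ∂ν = ∫ ω, φ (Z ω) * Y ω ∂ν :=
        (integral_mul_eq_setIntegral ν _ _ (Az z) (hAzm z) hφY hg1 hg0).symm
      rw [hYZ, hsplit, hind1, hind0, hind0', hφZint, hφDint]
      linear_combination (∫ ω in Az z, D ω ∂ν) * hτu
    -- aggregate over u
    have hDint : Integrable D μ := by
      have : Integrable (fun _ => (1:ℝ)) μ := integrable_const 1
      exact (this.bdd_mul hDmeas.aestronglyMeasurable (Filter.Eventually.of_forall hDb)).congr
        (Filter.Eventually.of_forall fun ω => by simp)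
    rw [hpart Y hYint z, hpart D hDint z]
    calc ∑ u, (μ (Uu u)).toReal * ∫ ω in Az z, Y ω ∂(μ[|Uu u])
        = ∑ u, ((μ (Uu u)).toReal * ((∫ ω, Y0 ω ∂(μ[|Uu u])) * (μ (Az z)).toReal)
            + τ * ((μ (Uu u)).toReal * ∫ ω in Az z, D ω ∂(μ[|Uu u]))) := by
          refine Finset.sum_congr rfl fun u _ => ?_
          rw [keyU u]; ring
      _ = S0 * (μ (Az z)).toReal
            + τ * ∑ u, (μ (Uu u)).toReal * ∫ ω in Az z, D ω ∂(μ[|Uu u]) := by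
          rw [Finset.sum_add_distrib, ← Finset.mul_sum, hS0, Finset.sum_mul]
          congr 1
          refine Finset.sum_congr rfl fun u _ => ?_
          ring
  -- apply key at z = 1 and z = 0
  have hkey1 := key 1 (Or.inr rfl) id measurable_id (by simpa using hZb)
    (fun ω h => by simp only [id_eq]; exact h)
    (fun ω h => by
      rcases hZ01 ω with h' | h'
      · simp only [id_eq]; exact h'
      · exact absurd h' h)
  have hkey0 := key 0 (Or.inl rfl) (fun x => 1 - x) (measurable_const.sub measurable_id)
    (by intro ω; rcases hZ01 ω with h | h <;> simp [h])
    (fun ω h => by simp [h])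
    (fun ω h => by
      rcases hZ01 ω with h' | h'
      · exact absurd h' h
      · simp [h'])
  -- conclude
  have hcm : ∀ z : ℝ, (z = 0 ∨ z = 1) →
      (∫ ω in Az z, Y ω ∂μ = S0 * (μ (Az z)).toReal + τ * ∫ ω in Az z, D ω ∂μ) →
      condMean μ Y (Az z) = S0 + τ * condMean μ D (Az z) := by
    intro z hz h
    have hq := hAzpos z hz
    rw [condMean, condMean, h]
    field_simp
  have hcm1 := hcm 1 (Or.inr rfl) hkey1
  have hcm0 := hcm 0 (Or.inl rfl) hkey0
  have hδYτ : δY = τ * δD := by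
    rw [hδY, hδD]
    have e1 : {ω | Z ω = (1:ℝ)} = Az 1 := rfl
    have e0 : {ω | Z ω = (0:ℝ)} = Az 0 := rfl
    rw [e1, e0, hcm1, hcm0]
    ring
  rw [hδYτ, mul_div_assoc, div_self hδDne, mul_one]
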